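/- If a binary word f of length n has a 1-tilde-error overlap of shift r with a swap error, i.e., suf_{n-r}(f) = S_i(pre_{n-r}(f)) for some position i with pre_{n-r}(f)[i] = 0 and pre_{n-r}(f)[i+1] = 1, then f is tilde-non-isometric; in particular (u,v) = (pre_r(f)·R_i(f), pre_r(f)·R_{i+1}(f)) is a pair of tilde-witnesses: u and v are f-free, dist~(u,v) = 2, and no tilde-transformation of length 2 from u to v keeps all intermediate words f-free. -/

import Mathlib

/-- One tilde edit step: a single-bit replacement or a swap of two adjacent distinct symbols. -/
def tildeStep (u v : List Bool) : Prop :=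
  (∃ i, i < u.length ∧ v = u.set i (!(u.getD i false))) ∨
  (∃ i, i + 1 < u.length ∧ u.getD i false ≠ u.getD (i+1) false ∧
    v = (u.set i (u.getD (i+1) false)).set (i+1) (u.getD i false))

/-- A chain of `d` tilde steps from `u` to `v`. -/
def tildeChain : ℕ → List Bool → List Bool → Prop
  | 0, u, v => u = v
  | d+1, u, v => ∃ w, tildeStep u w ∧ tildeChain d w v

/-- The tilde-distance: minimum number of replacements and adjacent swaps. -/
noncomputable def tildeDist (u v : List Bool) : ℕ :=
  sInf {d | tildeChain d u v}

/-- `f` occurs as a contiguous factor of `w`. -/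
def isFactor (f w : List Bool) : Prop := ∃ s t, w = s ++ f ++ t

/-- `w` is `f`-free. -/
def fFree (f w : List Bool) : Prop := ¬ isFactor f w

/-- A chain of `d` tilde steps from `u` to `v` all of whose intermediate words are `f`-free. -/
def freeTildeChain (f : List Bool) : ℕ → List Bool → List Bool → Prop
  | 0, u, v => u = v
  | d+1, u, v => ∃ w, tildeStep u w ∧ fFree f w ∧ freeTildeChain f d w v

/-- `f` is tilde-isometric. -/
def tildeIsometric (f : List Bool) : Prop :=
  ∀ u v : List Bool, u.length = v.length → f.length ≤ u.length →
    fFree f u → fFree f v → freeTildeChain f (tildeDist u v) u v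

/-- Replacement at (0-indexed) position `i`. -/
def repl (w : List Bool) (i : ℕ) : List Bool := w.set i (!(w.getD i false))

/-- Swap of positions `i` and `i+1` (0-indexed). -/
def swap (w : List Bool) (i : ℕ) : List Bool :=
  (w.set i (w.getD (i+1) false)).set (i+1) (w.getD i false)

/-- Hamming distance between equal-length binary words. -/
def hammingDistL (u v : List Bool) : ℕ :=
  ((List.range u.length).filter (fun i => u.getD i false != v.getD i false)).length

/-- One Hamming edit step: a single-bit replacement. -/
def hammStep (u v : List Bool) : Prop :=
  ∃ i, i < u.length ∧ v = u.set i (!(u.getD i false))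

/-- A chain of `d` Hamming steps from `u` to `v`, all intermediate words `f`-free. -/
def freeHammChain (f : List Bool) : ℕ → List Bool → List Bool → Prop
  | 0, u, v => u = v
  | d+1, u, v => ∃ w, hammStep u w ∧ fFree f w ∧ freeHammChain f d w v

/-- `f` is Hamming-isometric. -/
def hammIsometric (f : List Bool) : Prop :=
  ∀ u v : List Bool, u.length = v.length → f.length ≤ u.length →
    fFree f u → fFree f v → freeHammChain f (hammingDistL u v) u v

section Aux

lemma gd_set (l : List Bool) (p k : ℕ) (x : Bool) :
    (l.set p x).getD k false = if p = k ∧ p < l.length then x else l.getD k false := by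
  rw [List.getD_eq_getElem?_getD, List.getD_eq_getElem?_getD, List.getElem?_set]
  by_cases h1 : p = k
  · subst h1
    by_cases h2 : p < l.length
    · simp [h2]
    · simp [h2, List.getElem?_eq_none (by omega : l.length ≤ p)]
  · simp [h1]

lemma gd_append (a b : List Bool) (k : ℕ) :
    (a ++ b).getD k false
      = if k < a.length then a.getD k false else b.getD (k - a.length) false := by
  rw [List.getD_eq_getElem?_getD, List.getElem?_append]
  split_ifs with h <;> rw [List.getD_eq_getElem?_getD]

lemma gd_take (l : List Bool) (m k : ℕ) :
    (l.take m).getD k false = if k < m then l.getD k false else false := by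
  rw [List.getD_eq_getElem?_getD, List.getElem?_take]
  split_ifs with h
  · rw [List.getD_eq_getElem?_getD]
  · rfl

lemma gd_drop (l : List Bool) (m k : ℕ) :
    (l.drop m).getD k false = l.getD (m + k) false := by
  rw [List.getD_eq_getElem?_getD, List.getElem?_drop, List.getD_eq_getElem?_getD]

lemma ext_gd {a b : List Bool} (hl : a.length = b.length)
    (h : ∀ k, k < a.length → a.getD k false = b.getD k false) : a = b := by
  apply List.ext_getElem hl
  intro nn h1 h2
  have := h nn h1
  rwa [List.getD_eq_getElem _ _ h1, List.getD_eq_getElem _ _ h2] at this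

end Aux

lemma tildeStep_flip {a b : List Bool} (h : tildeStep a b) :
    ∃ p q : ℕ, p ≤ q ∧ q ≤ p + 1 ∧ q < a.length ∧ b.length = a.length ∧
      (p ≠ q → a.getD p false ≠ a.getD q false) ∧
      (∀ k, b.getD k false = if k = p ∨ k = q then !(a.getD k false) else a.getD k false) := by
  rcases h with ⟨p, hp, rfl⟩ | ⟨p, hp, hne, rfl⟩
  · refine ⟨p, p, le_rfl, by omega, hp, by simp, by simp, fun k => ?_⟩
    rw [gd_set]
    by_cases hk : k = p
    · subst hk; simp [hp]
    · simp [hk, show ¬ p = k from fun h => hk h.symm]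
  · have hplen : p < a.length := by omega
    have hx : a.getD (p+1) false = !(a.getD p false) := by
      cases hA : a.getD p false <;> cases hB : a.getD (p+1) false <;> simp_all
    refine ⟨p, p+1, by omega, le_rfl, hp, by simp, fun _ => hne, fun k => ?_⟩
    rw [gd_set, gd_set]
    simp only [List.length_set]
    by_cases hk1 : k = p + 1
    · subst hk1
      rw [if_pos ⟨rfl, hp⟩, if_pos (by omega : p + 1 = p ∨ p + 1 = p + 1), hx]
      simp
    · by_cases hk2 : k = p
      · rw [if_neg (by omega : ¬(p + 1 = k ∧ p + 1 < a.length)),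
          if_pos (⟨by omega, hplen⟩ : p = k ∧ p < a.length),
          if_pos (by omega : k = p ∨ k = p + 1), hk2, hx]
      · rw [if_neg (by omega : ¬(p + 1 = k ∧ p + 1 < a.length)),
          if_neg (by omega : ¬(p = k ∧ p < a.length)),
          if_neg (by omega : ¬(k = p ∨ k = p + 1))]

lemma aux_noswap (A p1 p2 q2 : ℕ) (hpq2 : p2 ≤ q2) (hq2 : q2 ≤ p2+1)
    (key : ∀ k, ((k = A ∨ k = A+1) ↔ ¬((k = p1 ∨ k = p1+1) ↔ (k = p2 ∨ k = q2)))) :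
    False := by
  have k1 := key A
  have k2 := key (A+1)
  have k3 := key p1
  have k4 := key (p1+1)
  have k5 := key p2
  have k6 := key q2
  omega

lemma aux_repl (A B p1 p2 : ℕ) (hB : B = A + 1)
    (key : ∀ k, ((k = A ∨ k = B) ↔ ¬((k = p1) ↔ (k = p2)))) :
    ((p1 = A ∧ p2 = B) ∨ (p1 = B ∧ p2 = A)) := by
  have k1 := key A
  have k2 := key B
  have k3 := key p1
  have k5 := key p2
  omega

lemma flipflip_cases (A B p1 q1 p2 q2 : ℕ) (hpq1 : p1 ≤ q1) (hq1 : q1 ≤ p1+1)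
    (hpq2 : p2 ≤ q2) (hq2 : q2 ≤ p2+1) (hB : B = A + 1)
    (key : ∀ k, ((k = A ∨ k = B) ↔ ¬((k = p1 ∨ k = q1) ↔ (k = p2 ∨ k = q2)))) :
    p1 = q1 ∧ p2 = q2 ∧ ((p1 = A ∧ p2 = B) ∨ (p1 = B ∧ p2 = A)) := by
  have hq1' : q1 = p1 ∨ q1 = p1 + 1 := by omega
  have hq2' : q2 = p2 ∨ q2 = p2 + 1 := by omega
  rcases hq1' with hq1e | hq1e
  · rcases hq2' with hq2e | hq2e
    · have key' : ∀ k, ((k = A ∨ k = B) ↔ ¬((k = p1) ↔ (k = p2))) := by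
        intro k
        have h := key k
        rwa [hq1e, or_self, hq2e, or_self] at h
      exact ⟨hq1e.symm, hq2e.symm, aux_repl A B p1 p2 hB key'⟩
    · exfalso
      apply aux_noswap A p2 p1 q1 hpq1 hq1
      intro k
      have h := key k
      rw [hB] at h
      rw [hq2e] at h
      tauto
  · exfalso
    apply aux_noswap A p1 p2 q2 hpq2 hq2
    intro k
    have h := key k
    rwa [hB, hq1e] at h

lemma occ_extract {f w a b : List Bool} (heq : w = a ++ f ++ b) :
    ∀ j, j < f.length → f.getD j false = w.getD (a.length + j) false := by
  intro j hj
  rw [heq, List.append_assoc, gd_append, if_neg (by omega),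
    show a.length + j - a.length = j from by omega, gd_append, if_pos hj]

theorem stmt11 (f : List Bool) (n r i : ℕ) (hn : f.length = n)
    (hr0 : 0 < r) (hrn : r < n) (hi : i + 1 < n - r)
    (h0 : (f.take (n - r)).getD i false = false)
    (h1 : (f.take (n - r)).getD (i+1) false = true)
    (hov : f.drop r = swap (f.take (n - r)) i) :
    fFree f (f.take r ++ repl f i) ∧ fFree f (f.take r ++ repl f (i+1)) ∧
    tildeDist (f.take r ++ repl f i) (f.take r ++ repl f (i+1)) = 2 ∧
    (∀ w : List Bool, tildeStep (f.take r ++ repl f i) w →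
        tildeStep w (f.take r ++ repl f (i+1)) → isFactor f w) ∧
    ¬ tildeIsometric f := by
  have hFi : f.getD i false = false := by
    rw [gd_take, if_pos (by omega)] at h0; exact h0
  have hFi1 : f.getD (i+1) false = true := by
    rw [gd_take, if_pos hi] at h1; exact h1
  have hlen_take : (f.take (n-r)).length = n - r := by
    rw [List.length_take, hn, min_eq_left (by omega)]
  have hov' : ∀ m, f.getD (r+m) false = (swap (f.take (n-r)) i).getD m false := by
    intro m; rw [← hov, gd_drop]
  have hov1 : f.getD (r+i) false = true := by
    have h := hov' i
    unfold swap at h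
    rw [gd_set, gd_set] at h
    simp only [List.length_set, hlen_take] at h
    rw [if_neg (show ¬(i + 1 = i ∧ i + 1 < n - r) from by omega),
      if_pos (show True ∧ i < n - r from ⟨trivial, by omega⟩), h1] at h
    exact h
  have hov2 : f.getD (r+i+1) false = false := by
    have h := hov' (i+1)
    unfold swap at h
    rw [gd_set, gd_set] at h
    simp only [List.length_set, hlen_take] at h
    rw [if_pos (show True ∧ i + 1 < n - r from ⟨trivial, hi⟩), h0] at h
    rw [show r + i + 1 = r + (i+1) from by omega]
    exact h
  have hov3 : ∀ m, m < n - r → m ≠ i → m ≠ i + 1 → f.getD (r+m) false = f.getD m false := by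
    intro m hm hmi hmi1
    have h := hov' m
    unfold swap at h
    rw [gd_set, gd_set] at h
    simp only [List.length_set, hlen_take] at h
    rw [if_neg (show ¬(i + 1 = m ∧ i + 1 < n - r) from by omega),
      if_neg (show ¬(i = m ∧ i < n - r) from by omega), gd_take, if_pos hm] at h
    exact h
  set u := f.take r ++ repl f i with hudef
  set v := f.take r ++ repl f (i+1) with hvdef
  have hltr : (f.take r).length = r := by
    rw [List.length_take, hn, min_eq_left (by omega)]
  have hlu : u.length = r + n := by
    rw [hudef, List.length_append, hltr]
    simp [repl, hn]
  have hlv : v.length = r + n := by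
    rw [hvdef, List.length_append, hltr]
    simp [repl, hn]
  have hgen : ∀ j : ℕ, j < n → ∀ k, (f.take r ++ repl f j).getD k false
      = if k < r then f.getD k false
        else if k = r + j then !(f.getD j false) else f.getD (k - r) false := by
    intro j hj k
    rw [gd_append, hltr]
    by_cases hk : k < r
    · rw [if_pos hk, if_pos hk, gd_take, if_pos hk]
    · rw [if_neg hk, if_neg hk]
      unfold repl
      rw [gd_set]
      by_cases hk2 : k = r + j
      · rw [if_pos (show j = k - r ∧ j < f.length from ⟨by omega, by omega⟩), if_pos hk2]
      · rw [if_neg (show ¬(j = k - r ∧ j < f.length) from by omega), if_neg hk2]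
  have hu : ∀ k, u.getD k false
      = if k < r then f.getD k false
        else if k = r + i then !(f.getD i false) else f.getD (k - r) false :=
    hgen i (by omega)
  have hv : ∀ k, v.getD k false
      = if k < r then f.getD k false
        else if k = r + (i+1) then !(f.getD (i+1) false) else f.getD (k - r) false :=
    hgen (i+1) (by omega)
  have hu_ri : u.getD (r+i) false = true := by
    rw [hu, if_neg (by omega), if_pos rfl, hFi]; rfl
  have hu_ri1 : u.getD (r+i+1) false = true := by
    rw [hu, if_neg (by omega), if_neg (by omega), show r + i + 1 - r = i + 1 from by omega, hFi1]
  have hv_ri : v.getD (r+i) false = false := by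
    rw [hv, if_neg (by omega), if_neg (by omega), show r + i - r = i from by omega, hFi]
  have hv_ri1 : v.getD (r+i+1) false = false := by
    rw [hv, if_neg (by omega), if_pos (by omega), hFi1]; rfl
  have huv_off : ∀ k, k ≠ r + i → k ≠ r + i + 1 → u.getD k false = v.getD k false := by
    intro k hk1 hk2
    rw [hu, hv]
    by_cases hk : k < r
    · rw [if_pos hk, if_pos hk]
    · rw [if_neg hk, if_neg hk, if_neg hk1, if_neg (by omega)]
  -- freeness of u
  have freeU : fFree f u := by
    rintro ⟨a, b, heq⟩
    have hL := congrArg List.length heq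
    rw [hlu] at hL
    simp only [List.length_append, hn] at hL
    have hs : a.length ≤ r := by omega
    have hocc := occ_extract heq
    rw [hn] at hocc
    set s := a.length with hsdef
    by_cases hsr : s = r
    · have h := hocc i (by omega)
      rw [hu, hsr, if_neg (by omega), if_pos rfl, hFi] at h
      simp at h
    · have hsr' : s < r := lt_of_le_of_ne hs hsr
      have e3 : f.getD (s + (i+1)) false = false := by
        have h := hocc (r+i+1) (by omega)
        rw [hu, if_neg (by omega), if_neg (by omega),
          show s + (r+i+1) - r = s + (i+1) from by omega] at h
        rw [← h]; exact hov2
      by_cases hs0 : s = 0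
      · rw [hs0, zero_add, hFi1] at e3
        simp at e3
      · have e4 : f.getD (s + i) false = true := by
          have h := hocc (r+i) (by omega)
          rw [hu, if_neg (by omega), if_neg (by omega),
            show s + (r+i) - r = s + i from by omega] at h
          rw [← h]; exact hov1
        by_cases hlt : s + i < r
        · have h := hocc i (by omega)
          rw [hu, if_pos hlt, hFi, e4] at h
          simp at h
        · have e5 : f.getD (s + i - r) false = false := by
            have h := hocc i (by omega)
            rw [hu, if_neg (by omega), if_neg (by omega), hFi] at h
            exact h.symm
          have e6 := hov3 (s + i - r) (by omega) (by omega) (by omega)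
          rw [show r + (s + i - r) = s + i from by omega, e5, e4] at e6
          simp at e6
  -- freeness of v
  have freeV : fFree f v := by
    rintro ⟨a, b, heq⟩
    have hL := congrArg List.length heq
    rw [hlv] at hL
    simp only [List.length_append, hn] at hL
    have hs : a.length ≤ r := by omega
    have hocc := occ_extract heq
    rw [hn] at hocc
    set s := a.length with hsdef
    by_cases hsr : s = r
    · have h := hocc (i+1) (by omega)
      rw [hv, hsr, if_neg (by omega), if_pos rfl, hFi1] at h
      simp at h
    · have hsr' : s < r := lt_of_le_of_ne hs hsr
      by_cases hs0 : s = 0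
      · have h := hocc (r+i) (by omega)
        rw [hv, hs0, zero_add, if_neg (by omega), if_neg (by omega),
          show r + i - r = i from by omega, hFi, hov1] at h
        simp at h
      · have eA : f.getD (s + (i+1)) false = false := by
          have h := hocc (r+i+1) (by omega)
          rw [hv, if_neg (by omega), if_neg (by omega),
            show s + (r+i+1) - r = s + (i+1) from by omega] at h
          rw [← h]; exact hov2
        by_cases hA : s + (i+1) = r + i
        · rw [hA, hov1] at eA
          simp at eA
        · by_cases hB : s + (i+1) < r
          · have h := hocc (i+1) (by omega)
            rw [hv, if_pos hB, hFi1, eA] at h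
            simp at h
          · have h := hocc (i+1) (by omega)
            rw [hv, if_neg (by omega), if_neg (by omega), hFi1] at h
            have e6 := hov3 (s + (i+1) - r) (by omega) (by omega) (by omega)
            rw [show r + (s + (i+1) - r) = s + (i+1) from by omega, eA, ← h] at e6
            simp at e6
  -- distance facts
  have hne0 : u ≠ v := by
    intro he
    have := congrArg (fun l => l.getD (r+i) false) he
    rw [hu_ri, hv_ri] at this
    simp at this
  have step1 : tildeStep u (u.set (r+i) (!(u.getD (r+i) false))) :=
    Or.inl ⟨r+i, by rw [hlu]; omega, rfl⟩
  have hw1len : (u.set (r+i) (!(u.getD (r+i) false))).length = r + n := by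
    rw [List.length_set, hlu]
  have hw1gd : ∀ k, (u.set (r+i) (!(u.getD (r+i) false))).getD k false
      = if k = r + i then !(u.getD k false) else u.getD k false := by
    intro k
    rw [gd_set]
    by_cases hk : k = r + i
    · rw [if_pos (show r + i = k ∧ r + i < u.length from ⟨hk.symm, by rw [hlu]; omega⟩),
        if_pos hk, hk]
    · rw [if_neg (show ¬(r + i = k ∧ r + i < u.length) from by omega), if_neg hk]
  have step2 : tildeStep (u.set (r+i) (!(u.getD (r+i) false))) v := by
    refine Or.inl ⟨r+i+1, by rw [hw1len]; omega, ?_⟩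
    apply ext_gd
    · rw [hlv, List.length_set, hw1len]
    · intro k hk
      rw [gd_set, hw1len]
      by_cases hk1 : k = r + i + 1
      · rw [if_pos (show r + i + 1 = k ∧ r + i + 1 < r + n from ⟨hk1.symm, by omega⟩),
          hk1, hw1gd, if_neg (by omega), hu_ri1, hv_ri1]
        rfl
      · rw [if_neg (show ¬(r + i + 1 = k ∧ r + i + 1 < r + n) from by omega), hw1gd]
        by_cases hk2 : k = r + i
        · rw [if_pos hk2, hk2, hu_ri, hv_ri]
          rfl
        · rw [if_neg hk2, huv_off k hk2 hk1]
  have hchain2 : tildeChain 2 u v := ⟨_, step1, v, step2, rfl⟩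
  have hnot1 : ¬ tildeChain 1 u v := by
    rintro ⟨w, hst, hw0⟩
    cases hw0
    obtain ⟨p, q, hpq, hq, hql, hlw, hd, hpt⟩ := tildeStep_flip hst
    have e1 := hpt (r+i)
    rw [hv_ri, hu_ri] at e1
    split_ifs at e1 with c1
    have e2 := hpt (r+i+1)
    rw [hv_ri1, hu_ri1] at e2
    split_ifs at e2 with c2
    have hpv : p = r + i := by omega
    have hqv : q = r + i + 1 := by omega
    have := hd (by omega)
    rw [hpv, hqv, hu_ri, hu_ri1] at this
    exact this rfl
  have hdist : tildeDist u v = 2 := by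
    unfold tildeDist
    refine le_antisymm (Nat.sInf_le hchain2) (le_csInf ⟨2, hchain2⟩ ?_)
    rintro (_|_|d) hd
    · exact absurd (show u = v from hd) hne0
    · exact absurd (show tildeChain 1 u v from hd) hnot1
    · omega
  -- part 4
  have part4 : ∀ w : List Bool, tildeStep u w → tildeStep w v → isFactor f w := by
    intro w hw1 hw2
    obtain ⟨p1, q1, hpq1, hq1, hq1l, hlw, hd1, hwpt⟩ := tildeStep_flip hw1
    obtain ⟨p2, q2, hpq2, hq2, hq2l, hlv2, hd2, hvpt⟩ := tildeStep_flip hw2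
    rw [hlu] at hq1l
    rw [hlw, hlu] at hq2l
    have key : ∀ k, ((k = r + i ∨ k = r + i + 1)
        ↔ ¬((k = p1 ∨ k = q1) ↔ (k = p2 ∨ k = q2))) := by
      intro k
      have hdiff : u.getD k false ≠ v.getD k false ↔ (k = r + i ∨ k = r + i + 1) := by
        constructor
        · intro hne
          by_contra hc
          push_neg at hc
          exact hne (huv_off k hc.1 hc.2)
        · rintro (rfl | rfl)
          · rw [hu_ri, hv_ri]; simp
          · rw [hu_ri1, hv_ri1]; simp
      rw [← hdiff, hvpt k, hwpt k]
      by_cases c1 : (k = p1 ∨ k = q1) <;> by_cases c2 : (k = p2 ∨ k = q2) <;>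
        simp [c1, c2]
    have hmain := flipflip_cases (r+i) (r+i+1) p1 q1 p2 q2 hpq1 hq1 hpq2 hq2 rfl key
    obtain ⟨e1, e2, ⟨hp1, -⟩ | ⟨hp1, -⟩⟩ := hmain
    · -- w = flip of u at r+i : w = f.take r ++ f
      refine ⟨f.take r, [], ?_⟩
      apply ext_gd
      · rw [hlw, hlu, List.append_nil, List.length_append, hltr, hn]
      · intro k hk
        rw [hlw, hlu] at hk
        rw [hwpt k, ← e1, hp1, hu, List.append_nil, gd_append, hltr]
        by_cases hkr : k < r
        · rw [if_neg (by omega : ¬(k = r + i ∨ k = r + i)), if_pos hkr, if_pos hkr, gd_take, if_pos hkr]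
        · rw [if_neg hkr, if_neg hkr]
          by_cases hk2 : k = r + i
          · rw [if_pos (by omega : k = r + i ∨ k = r + i), if_pos hk2, Bool.not_not,
              show k - r = i from by omega]
          · rw [if_neg (by omega : ¬(k = r + i ∨ k = r + i)), if_neg hk2]
    · -- w = flip of u at r+i+1 : w = f ++ f.drop (n-r)
      refine ⟨[], f.drop (n - r), ?_⟩
      apply ext_gd
      · rw [hlw, hlu, List.nil_append, List.length_append, List.length_drop, hn]
        omega
      · intro k hk
        rw [hlw, hlu] at hk
        rw [hwpt k, ← e1, hp1, hu, List.nil_append, gd_append, hn, gd_drop]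
        by_cases hkr : k < r
        · rw [if_neg (by omega : ¬(k = r + i + 1 ∨ k = r + i + 1)), if_pos hkr,
            if_pos (by omega : k < n)]
        · rw [if_neg hkr]
          by_cases hkn : k < n
          · rw [if_pos hkn]
            by_cases hk2 : k = r + i + 1
            · rw [if_pos (by omega : k = r + i + 1 ∨ k = r + i + 1), if_neg (by omega),
                show k - r = i + 1 from by omega, hFi1, hk2, hov2]
              rfl
            · rw [if_neg (by omega : ¬(k = r + i + 1 ∨ k = r + i + 1))]
              by_cases hk3 : k = r + i
              · rw [if_pos hk3, hFi, hk3, hov1]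
                rfl
              · rw [if_neg hk3, ← hov3 (k - r) (by omega) (by omega) (by omega),
                  show r + (k - r) = k from by omega]
          · rw [if_neg hkn, if_neg (by omega : ¬(k = r + i + 1 ∨ k = r + i + 1)),
              if_neg (by omega), show n - r + (k - n) = k - r from by omega]
  refine ⟨freeU, freeV, hdist, part4, ?_⟩
  intro hiso
  have h := hiso u v (by rw [hlu, hlv]) (by rw [hlu, hn]; omega) freeU freeV
  rw [hdist] at h
  obtain ⟨w, hs1, hfw, w', hs2, hfw', hw'⟩ := h
  cases hw'
  exact hfw (part4 w hs1 hs2)
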